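/- arXiv:2001.10770 — 4 statements merged into one kernel-verified Lean document; each statement's English description precedes it below -/
import Mathlib

section
/- Let H be an s × n matrix over F₂ such that every vector in F₂^s is a sum of at most 2 columns of H (where the empty sum is the zero vector). Fix a row index i, and let H' be the s × (n+1) matrix obtained from H by replacing row i with its complement (flipping every bit in row i) and appending one extra column equal to the i-th standard basis vector e_i. Then every vector in F₂^s is a sum of at most 2 columns of H'. -/
/-- If every vector of `F₂^s` is a sum of at most 2 columns of `H`, then the same holds
for the `i₀`-th modified matrix `H'`, obtained by complementing row `i₀` of `H` and
appending the standard basis column `e_{i₀}`. -/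
theorem modified_matrix_covering (s n : ℕ) (H : Matrix (Fin s) (Fin n) (ZMod 2))
    (i₀ : Fin s)
    (hcov : ∀ v : Fin s → ZMod 2, ∃ T : Finset (Fin n), T.card ≤ 2 ∧
      v = ∑ j ∈ T, fun i => H i j)
    (H' : Matrix (Fin s) (Fin (n + 1)) (ZMod 2))
    (hH'₁ : ∀ (i : Fin s) (j : Fin n),
      H' i j.castSucc = H i j + (if i = i₀ then 1 else 0))
    (hH'₂ : ∀ i : Fin s, H' i (Fin.last n) = if i = i₀ then 1 else 0) :
    ∀ v : Fin s → ZMod 2, ∃ T : Finset (Fin (n + 1)), T.card ≤ 2 ∧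
      v = ∑ j ∈ T, fun i => H' i j := by
  intro v
  obtain ⟨T, hc, hv⟩ := hcov v
  interval_cases hcard : T.card
  · -- card 0
    rw [Finset.card_eq_zero] at hcard
    subst hcard
    refine ⟨∅, by simp, ?_⟩
    simpa using hv
  · -- card 1
    obtain ⟨j, rfl⟩ := Finset.card_eq_one.mp hcard
    have hne : j.castSucc ≠ Fin.last n := (Fin.castSucc_lt_last j).ne
    refine ⟨{j.castSucc, Fin.last n}, Finset.card_insert_le _ _ |>.trans (by simp), ?_⟩
    rw [Finset.sum_pair hne]
    funext i
    have hvi : v i = H i j := by rw [hv]; simp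
    simp only [Pi.add_apply, hH'₁, hH'₂, hvi]
    split_ifs <;> ring_nf <;> simp [show (2:ZMod 2) = 0 from rfl]
  · -- card 2
    obtain ⟨j, k, hjk, rfl⟩ := Finset.card_eq_two.mp hcard
    have hne : j.castSucc ≠ k.castSucc := fun h => hjk (Fin.castSucc_injective n h)
    refine ⟨{j.castSucc, k.castSucc}, Finset.card_insert_le _ _ |>.trans (by simp), ?_⟩
    rw [Finset.sum_pair hne]
    funext i
    have hvi : v i = H i j + H i k := by
      rw [hv, Finset.sum_pair hjk]; rfl
    simp only [Pi.add_apply, hH'₁, hH'₂, hvi]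
    split_ifs <;> ring_nf <;> simp [show (2:ZMod 2) = 0 from rfl]
end

section
/- For all positive integers s and t with t ≤ s, the minimum number of t-dimensional subspaces of F₂^s whose union contains every nonzero vector of F₂^s (equivalently, covers every 1-dimensional subspace) equals ⌈(2^s - 1)/(2^t - 1)⌉. -/
open Module Finset

namespace CoveringAux



/-- the ceiling value -/
def N (s t : ℕ) : ℕ := (2 ^ s - 1 + (2 ^ t - 1) - 1) / (2 ^ t - 1)

lemma two_le_pow {t : ℕ} (ht : 1 ≤ t) : 2 ≤ 2 ^ t :=
  le_trans (by norm_num) (Nat.pow_le_pow_right (by norm_num) ht)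

lemma N_key {s t : ℕ} (ht : 1 ≤ t) (hts : t ≤ s) :
    N s t = 2 ^ (s - t) + (2 ^ (s - t) + 2 ^ t - 3) / (2 ^ t - 1) := by
  have h2t := two_le_pow ht
  have h1 : (1:ℕ) ≤ 2 ^ (s - t) := Nat.one_le_two_pow
  have hps : 2 ^ (s - t) ≤ 2 ^ s := Nat.pow_le_pow_right (by norm_num) (Nat.sub_le s t)
  have hprod : 2 ^ (s - t) * (2 ^ t - 1) = 2 ^ s - 2 ^ (s - t) := by
    rw [Nat.mul_sub, mul_one, ← pow_add, Nat.sub_add_cancel hts]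
  have hnum : 2 ^ s - 1 + (2 ^ t - 1) - 1
      = (2 ^ (s - t) + 2 ^ t - 3) + 2 ^ (s - t) * (2 ^ t - 1) := by
    rw [hprod]; omega
  rw [N, hnum, Nat.add_mul_div_right _ _ (by omega : 0 < 2 ^ t - 1), Nat.add_comm]

lemma N_self {t : ℕ} (ht : 1 ≤ t) : N t t = 1 := by
  have h2t := two_le_pow ht
  rw [N_key ht le_rfl, Nat.sub_self, pow_zero, Nat.div_eq_of_lt (by omega)]

lemma N_mid {s t : ℕ} (ht : 1 ≤ t) (h1 : t < s) (h2 : s < 2 * t) :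
    N s t = 2 ^ (s - t) + 1 := by
  have h2t := two_le_pow ht
  have hle : 2 ^ (s - t) ≤ 2 ^ (t - 1) := Nat.pow_le_pow_right (by norm_num) (by omega)
  have hlt : 2 ^ (t - 1) < 2 ^ t := Nat.pow_lt_pow_right (by norm_num) (by omega)
  have h2r := two_le_pow (show 1 ≤ s - t by omega)
  rw [N_key ht (le_of_lt h1)]
  congr 1
  exact Nat.div_eq_of_lt_le (by omega) (by omega)

lemma N_rec {s t : ℕ} (ht : 1 ≤ t) (hts : 2 * t ≤ s) :
    N s t = 2 ^ (s - t) + N (s - t) t := by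
  have h2t := two_le_pow ht
  have h1 : (1:ℕ) ≤ 2 ^ (s - t) := Nat.one_le_two_pow
  rw [N_key ht (by omega), N]
  congr 2
  omega

lemma N_le_of_cover {s t n : ℕ} (ht : 1 ≤ t) (h : 2 ^ s - 1 ≤ n * (2 ^ t - 1)) :
    N s t ≤ n := by
  have h2t := two_le_pow ht
  have : N s t < n + 1 := by
    rw [N, Nat.div_lt_iff_lt_mul (by omega : 0 < 2 ^ t - 1)]
    have : 2 ^ s ≥ 1 := Nat.one_le_two_pow
    calc 2 ^ s - 1 + (2 ^ t - 1) - 1 ≤ n * (2 ^ t - 1) + (2 ^ t - 1) - 1 := by omega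
    _ < (n + 1) * (2 ^ t - 1) := by rw [add_mul, one_mul]; omega
  omega




lemma lower_bound {s t n : ℕ}
    (S : Finset (Submodule (ZMod 2) (Fin s → ZMod 2)))
    (hcard : S.card = n)
    (hdim : ∀ V ∈ S, Module.finrank (ZMod 2) V = t)
    (hcov : ∀ v : Fin s → ZMod 2, v ≠ 0 → ∃ V ∈ S, v ∈ V) :
    2 ^ s - 1 ≤ n * (2 ^ t - 1) := by
  classical
  have hcardX : Fintype.card (Fin s → ZMod 2) = 2 ^ s := by
    simp [ZMod.card]
  have hsub : (univ.filter (fun x : Fin s → ZMod 2 => x ≠ 0)) ⊆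
      S.biUnion (fun V => univ.filter (fun x : Fin s → ZMod 2 => x ∈ V ∧ x ≠ 0)) := by
    intro x hx
    simp only [mem_filter, mem_univ, true_and] at hx
    obtain ⟨V, hV, hxV⟩ := hcov x hx
    simp only [Finset.mem_biUnion, mem_filter, mem_univ, true_and]
    exact ⟨V, hV, hxV, hx⟩
  have h1 : (univ.filter (fun x : Fin s → ZMod 2 => x ≠ 0)).card = 2 ^ s - 1 := by
    have he : (univ.filter (fun x : Fin s → ZMod 2 => x ≠ 0)) = univ.erase 0 := by
      ext x; simp
    rw [he, Finset.card_erase_of_mem (mem_univ _), Finset.card_univ, hcardX]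
  have h2 : ∀ V ∈ S, (univ.filter (fun x : Fin s → ZMod 2 => x ∈ V ∧ x ≠ 0)).card
      = 2 ^ t - 1 := by
    intro V hV
    have hVc : (univ.filter (fun x : Fin s → ZMod 2 => x ∈ V)).card = 2 ^ t := by
      rw [← Fintype.card_subtype]
      have h := card_eq_pow_finrank (K := ZMod 2) (V := ↥V)
      rw [ZMod.card, hdim V hV] at h
      convert h using 1
    have he : (univ.filter (fun x : Fin s → ZMod 2 => x ∈ V ∧ x ≠ 0))
        = (univ.filter (fun x : Fin s → ZMod 2 => x ∈ V)).erase 0 := by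
      ext x; simp [Finset.mem_erase, and_comm]
    rw [he, Finset.card_erase_of_mem (by simp [V.zero_mem]), hVc]
  calc 2 ^ s - 1 = _ := h1.symm
    _ ≤ _ := Finset.card_le_card hsub
    _ ≤ ∑ V ∈ S, (univ.filter (fun x : Fin s → ZMod 2 => x ∈ V ∧ x ≠ 0)).card :=
        Finset.card_biUnion_le
    _ = ∑ _V ∈ S, (2 ^ t - 1) := Finset.sum_congr rfl h2
    _ = n * (2 ^ t - 1) := by rw [Finset.sum_const, hcard, smul_eq_mul]

lemma transport {V W : Type} [AddCommGroup V] [Module (ZMod 2) V]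
    [AddCommGroup W] [Module (ZMod 2) W]
    (e : V ≃ₗ[ZMod 2] W) {t n : ℕ} (S : Finset (Submodule (ZMod 2) V))
    (hcard : S.card = n) (hdim : ∀ U ∈ S, finrank (ZMod 2) U = t)
    (hcov : ∀ v : V, v ≠ 0 → ∃ U ∈ S, v ∈ U) :
    ∃ S' : Finset (Submodule (ZMod 2) W), S'.card = n ∧
      (∀ U ∈ S', finrank (ZMod 2) U = t) ∧
      ∀ w : W, w ≠ 0 → ∃ U ∈ S', w ∈ U := by
  classical
  refine ⟨S.image (Submodule.map (e : V →ₗ[ZMod 2] W)), ?_, ?_, ?_⟩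
  · rw [Finset.card_image_of_injective _
      (Submodule.map_injective_of_injective (f := (e : V →ₗ[ZMod 2] W)) e.injective), hcard]
  · intro U hU
    obtain ⟨U₀, h₀, rfl⟩ := Finset.mem_image.mp hU
    rw [LinearEquiv.finrank_map_eq]
    exact hdim _ h₀
  · intro w hw
    obtain ⟨U, hU, hv⟩ := hcov (e.symm w) (e.symm.map_ne_zero_iff.mpr hw)
    exact ⟨_, Finset.mem_image_of_mem _ hU, ⟨e.symm w, hv, by simp⟩⟩




lemma step_big {t r n : ℕ} (ht : 1 ≤ t) (htr : t ≤ r)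
    (Sr : Finset (Submodule (ZMod 2) (Fin r → ZMod 2)))
    (hcard : Sr.card = n)
    (hdim : ∀ V ∈ Sr, finrank (ZMod 2) V = t)
    (hcov : ∀ v : Fin r → ZMod 2, v ≠ 0 → ∃ V ∈ Sr, v ∈ V) :
    ∃ S : Finset (Submodule (ZMod 2) ((Fin t → ZMod 2) × (Fin r → ZMod 2))),
      S.card = 2 ^ r + n ∧ (∀ V ∈ S, finrank (ZMod 2) V = t) ∧
      ∀ v : (Fin t → ZMod 2) × (Fin r → ZMod 2), v ≠ 0 → ∃ V ∈ S, v ∈ V := by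
  classical
  haveI : Fact (Nat.Prime 2) := ⟨Nat.prime_two⟩
  set F := GaloisField 2 r with hF
  haveI : Fintype F := Fintype.ofFinite F
  have hr : r ≠ 0 := by omega
  have hFcard : Fintype.card F = 2 ^ r := by
    have h := GaloisField.card 2 r hr
    rwa [Nat.card_eq_fintype_card] at h
  have hFrank : finrank (ZMod 2) F = r := GaloisField.finrank 2 hr
  let e : (Fin r → ZMod 2) ≃ₗ[ZMod 2] F :=
    LinearEquiv.ofFinrankEq _ _ (by rw [Module.finrank_fin_fun, hFrank])
  let surj : Fin r → Fin t := fun j => ⟨j % t, Nat.mod_lt _ ht⟩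
  have hsurj : Function.Surjective surj := by
    intro i
    refine ⟨⟨i, lt_of_lt_of_le i.2 htr⟩, ?_⟩
    simp only [surj]
    ext
    simp [Nat.mod_eq_of_lt i.2]
  let ι : (Fin t → ZMod 2) →ₗ[ZMod 2] F :=
    e.toLinearMap ∘ₗ LinearMap.funLeft (ZMod 2) (ZMod 2) surj
  have hι : Function.Injective ι :=
    e.injective.comp (LinearMap.funLeft_injective_of_surjective _ _ _ hsurj)
  let f : F → ((Fin t → ZMod 2) →ₗ[ZMod 2] (Fin r → ZMod 2)) := fun a =>
    e.symm.toLinearMap ∘ₗ LinearMap.mulLeft (ZMod 2) a ∘ₗ ι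
  have hfapply : ∀ a x, f a x = e.symm (a * ι x) := fun a x => rfl
  let G : F → Submodule (ZMod 2) ((Fin t → ZMod 2) × (Fin r → ZMod 2)) := fun a =>
    LinearMap.range (LinearMap.prod LinearMap.id (f a))
  have hmemG : ∀ (a : F) (x : Fin t → ZMod 2) (y : Fin r → ZMod 2),
      ((x, y) ∈ G a ↔ f a x = y) := by
    intro a x y
    constructor
    · rintro ⟨m, hm⟩
      simp only [LinearMap.prod_apply, Function.prod, LinearMap.id_apply, Prod.mk.injEq] at hm
      obtain ⟨h1, h2⟩ := hm
      rw [← h1]; exact h2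
    · intro h
      exact ⟨x, by simp only [LinearMap.prod_apply, Function.prod, LinearMap.id_apply, h]⟩
  let x₀ : Fin t → ZMod 2 := fun _ => 1
  have hx₀ : x₀ ≠ 0 := by
    intro h
    have := congrFun h ⟨0, ht⟩
    simp [x₀] at this
  have hιx₀ : ι x₀ ≠ 0 := fun h => hx₀ (hι (by rw [h, map_zero]))
  have hGinj : Function.Injective G := by
    intro a b hab
    have hmem : (x₀, f a x₀) ∈ G a := (hmemG a _ _).mpr rfl
    rw [hab] at hmem
    have h1 := (hmemG b _ _).mp hmem
    rw [hfapply, hfapply] at h1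
    have h2 : b * ι x₀ = a * ι x₀ := e.symm.injective h1
    exact mul_right_cancel₀ hιx₀ h2.symm
  have hGdim : ∀ a, finrank (ZMod 2) (G a) = t := by
    intro a
    have hinj : Function.Injective (LinearMap.prod LinearMap.id (f a) :
        (Fin t → ZMod 2) →ₗ[ZMod 2] _) := by
      intro u v huv
      simpa using congrArg Prod.fst huv
    rw [show G a = LinearMap.range (LinearMap.prod LinearMap.id (f a)) from rfl,
      LinearMap.finrank_range_of_inj hinj, Module.finrank_fin_fun]
  let inr := LinearMap.inr (ZMod 2) (Fin t → ZMod 2) (Fin r → ZMod 2)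
  have hinr : Function.Injective inr := LinearMap.inr_injective
  let Slift := Sr.image (Submodule.map inr)
  have hcardlift : Slift.card = n := by
    rw [Finset.card_image_of_injective _ (Submodule.map_injective_of_injective hinr), hcard]
  have hdisj : Disjoint (univ.image G) Slift := by
    rw [Finset.disjoint_left]
    intro V hV hV'
    obtain ⟨a, _, rfl⟩ := Finset.mem_image.mp hV
    obtain ⟨W, _, hmap⟩ := Finset.mem_image.mp hV'
    have hmem : (x₀, f a x₀) ∈ G a := (hmemG a _ _).mpr rfl
    rw [← hmap] at hmem
    obtain ⟨w, _, hw⟩ := hmem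
    have : (0 : Fin t → ZMod 2) = x₀ := congrArg Prod.fst hw
    exact hx₀ this.symm
  refine ⟨(univ.image G) ∪ Slift, ?_, ?_, ?_⟩
  · rw [Finset.card_union_of_disjoint hdisj,
      Finset.card_image_of_injective _ hGinj, Finset.card_univ, hFcard, hcardlift]
  · intro V hV
    rcases Finset.mem_union.mp hV with h | h
    · obtain ⟨a, _, rfl⟩ := Finset.mem_image.mp h
      exact hGdim a
    · obtain ⟨W, hW, rfl⟩ := Finset.mem_image.mp h
      rw [← (Submodule.equivMapOfInjective inr hinr W).finrank_eq]
      exact hdim W hW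
  · rintro ⟨x, y⟩ hv
    by_cases hx : x = 0
    · subst hx
      have hy : y ≠ 0 := by rintro rfl; exact hv rfl
      obtain ⟨W, hW, hyW⟩ := hcov y hy
      exact ⟨_, Finset.mem_union_right _ (Finset.mem_image_of_mem _ hW),
        ⟨y, hyW, rfl⟩⟩
    · have hιx : ι x ≠ 0 := fun h => hx (hι (by rw [h, map_zero]))
      refine ⟨G (e y * (ι x)⁻¹),
        Finset.mem_union_left _ (Finset.mem_image_of_mem _ (Finset.mem_univ _)), ?_⟩
      rw [hmemG, hfapply, mul_assoc, inv_mul_cancel₀ hιx, mul_one,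
        LinearEquiv.symm_apply_apply]




lemma step_small {t r : ℕ} (hr : 1 ≤ r) (hrt : r < t) :
    ∃ S : Finset (Submodule (ZMod 2)
        ((Fin (t - r) → ZMod 2) × ((Fin r → ZMod 2) × (Fin r → ZMod 2)))),
      S.card = 2 ^ r + 1 ∧ (∀ V ∈ S, finrank (ZMod 2) V = t) ∧
      ∀ v : (Fin (t - r) → ZMod 2) × ((Fin r → ZMod 2) × (Fin r → ZMod 2)),
        v ≠ 0 → ∃ V ∈ S, v ∈ V := by
  classical
  haveI : Fact (Nat.Prime 2) := ⟨Nat.prime_two⟩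
  set F := GaloisField 2 r with hF
  haveI : Fintype F := Fintype.ofFinite F
  have hr0 : r ≠ 0 := by omega
  have hFcard : Fintype.card F = 2 ^ r := by
    have h := GaloisField.card 2 r hr0
    rwa [Nat.card_eq_fintype_card] at h
  have hFrank : finrank (ZMod 2) F = r := GaloisField.finrank 2 hr0
  let e : (Fin r → ZMod 2) ≃ₗ[ZMod 2] F :=
    LinearEquiv.ofFinrankEq _ _ (by rw [Module.finrank_fin_fun, hFrank])
  let g : F → ((Fin r → ZMod 2) →ₗ[ZMod 2] (Fin r → ZMod 2)) := fun a =>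
    e.symm.toLinearMap ∘ₗ LinearMap.mulLeft (ZMod 2) a ∘ₗ e.toLinearMap
  have hgapply : ∀ a y, g a y = e.symm (a * e y) := fun a y => rfl
  let ψ : F → (((Fin (t - r) → ZMod 2) × (Fin r → ZMod 2)) →ₗ[ZMod 2]
      ((Fin (t - r) → ZMod 2) × ((Fin r → ZMod 2) × (Fin r → ZMod 2)))) := fun a =>
    LinearMap.prodMap LinearMap.id ((g a).prod LinearMap.id)
  have hψapply : ∀ a m y, ψ a (m, y) = (m, (g a y, y)) := fun a m y => rfl
  let U : F → Submodule (ZMod 2)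
      ((Fin (t - r) → ZMod 2) × ((Fin r → ZMod 2) × (Fin r → ZMod 2))) := fun a =>
    LinearMap.range (ψ a)
  have hmemU : ∀ (a : F) m x y, ((m, (x, y)) ∈ U a ↔ g a y = x) := by
    intro a m x y
    constructor
    · rintro ⟨⟨m', y'⟩, hm⟩
      rw [hψapply] at hm
      obtain ⟨h1, h2, h3⟩ : m' = m ∧ g a y' = x ∧ y' = y := by
        simpa [Prod.ext_iff] using hm
      rw [← h3]; exact h2
    · intro h
      exact ⟨(m, y), by rw [hψapply, h]⟩
  let φ : ((Fin (t - r) → ZMod 2) × (Fin r → ZMod 2)) →ₗ[ZMod 2]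
      ((Fin (t - r) → ZMod 2) × ((Fin r → ZMod 2) × (Fin r → ZMod 2))) :=
    LinearMap.prodMap LinearMap.id (LinearMap.inl (ZMod 2) _ _)
  have hφapply : ∀ m x, φ (m, x) = (m, (x, 0)) := fun m x => rfl
  let H : Submodule (ZMod 2)
      ((Fin (t - r) → ZMod 2) × ((Fin r → ZMod 2) × (Fin r → ZMod 2))) :=
    LinearMap.range φ
  have hmemH : ∀ m x (y : Fin r → ZMod 2), ((m, (x, y)) ∈ H ↔ y = 0) := by
    intro m x y
    constructor
    · rintro ⟨⟨m', x'⟩, hm⟩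
      rw [hφapply] at hm
      obtain ⟨-, -, h3⟩ : m' = m ∧ x' = x ∧ (0 : Fin r → ZMod 2) = y := by
        simpa [Prod.ext_iff] using hm
      exact h3.symm
    · rintro rfl
      exact ⟨(m, x), by rw [hφapply]⟩
  have hdom : finrank (ZMod 2) ((Fin (t - r) → ZMod 2) × (Fin r → ZMod 2)) = t := by
    rw [Module.finrank_prod, Module.finrank_fin_fun, Module.finrank_fin_fun]
    omega
  -- distinctness
  let x₀ : Fin r → ZMod 2 := fun _ => 1
  have hx₀ : x₀ ≠ 0 := by
    intro h
    have := congrFun h ⟨0, hr⟩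
    simp [x₀] at this
  have hUinj : Function.Injective U := by
    intro a b hab
    have hmem : ((0 : Fin (t - r) → ZMod 2), (g a x₀, x₀)) ∈ U a := (hmemU a _ _ _).mpr rfl
    rw [hab] at hmem
    have h1 := (hmemU b _ _ _).mp hmem
    rw [hgapply, hgapply] at h1
    have h2 : b * e x₀ = a * e x₀ := e.symm.injective h1
    have hex₀ : e x₀ ≠ 0 := e.map_ne_zero_iff.mpr hx₀
    exact mul_right_cancel₀ hex₀ h2.symm
  have hHnot : H ∉ univ.image U := by
    intro h
    obtain ⟨a, -, ha⟩ := Finset.mem_image.mp h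
    have hmem : ((0 : Fin (t - r) → ZMod 2), (x₀, 0)) ∈ H := (hmemH _ _ _).mpr rfl
    rw [← ha] at hmem
    have h1 := (hmemU a _ _ _).mp hmem
    rw [hgapply, map_zero, mul_zero, map_zero] at h1
    exact hx₀ h1.symm
  refine ⟨insert H (univ.image U), ?_, ?_, ?_⟩
  · rw [Finset.card_insert_of_notMem hHnot,
      Finset.card_image_of_injective _ hUinj, Finset.card_univ, hFcard]
  · intro V hV
    rcases Finset.mem_insert.mp hV with h | h
    · subst h
      have hinj : Function.Injective φ := by
        rintro ⟨m, x⟩ ⟨m', x'⟩ huv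
        rw [hφapply, hφapply] at huv
        obtain ⟨h1, h2, -⟩ : m = m' ∧ x = x' ∧ (0 : Fin r → ZMod 2) = 0 := by
          simpa [Prod.ext_iff] using huv
        rw [h1, h2]
      rw [show H = LinearMap.range φ from rfl, LinearMap.finrank_range_of_inj hinj, hdom]
    · obtain ⟨a, -, rfl⟩ := Finset.mem_image.mp h
      have hinj : Function.Injective (ψ a) := by
        rintro ⟨m, y⟩ ⟨m', y'⟩ huv
        rw [hψapply, hψapply] at huv
        obtain ⟨h1, -, h3⟩ : m = m' ∧ g a y = g a y' ∧ y = y' := by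
          simpa [Prod.ext_iff] using huv
        rw [h1, h3]
      rw [show U a = LinearMap.range (ψ a) from rfl,
        LinearMap.finrank_range_of_inj hinj, hdom]
  · rintro ⟨m, x, y⟩ hv
    by_cases hy : y = 0
    · subst hy
      exact ⟨H, Finset.mem_insert_self _ _, (hmemH _ _ _).mpr rfl⟩
    · have hey : e y ≠ 0 := e.map_ne_zero_iff.mpr hy
      refine ⟨U (e x * (e y)⁻¹),
        Finset.mem_insert_of_mem (Finset.mem_image_of_mem _ (Finset.mem_univ _)), ?_⟩
      rw [hmemU, hgapply, mul_assoc, inv_mul_cancel₀ hey, mul_one,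
        LinearEquiv.symm_apply_apply]




lemma exists_cover (t : ℕ) (ht : 1 ≤ t) :
    ∀ s, t ≤ s → ∃ S : Finset (Submodule (ZMod 2) (Fin s → ZMod 2)),
      S.card = N s t ∧ (∀ V ∈ S, finrank (ZMod 2) V = t) ∧
      ∀ v : Fin s → ZMod 2, v ≠ 0 → ∃ V ∈ S, v ∈ V := by
  intro s
  induction s using Nat.strong_induction_on with
  | _ s IH =>
    intro hts
    rcases eq_or_lt_of_le hts with heq | hlt
    · subst heq
      refine ⟨{⊤}, ?_, ?_, ?_⟩
      · rw [Finset.card_singleton, N_self ht]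
      · intro V hV
        rw [Finset.mem_singleton.mp hV, finrank_top, Module.finrank_fin_fun]
      · intro v _
        exact ⟨⊤, Finset.mem_singleton_self _, Submodule.mem_top⟩
    · by_cases hcase : s < 2 * t
      · obtain ⟨S₀, hc, hd, hcv⟩ := step_small (t := t) (r := s - t) (by omega) (by omega)
        have hrank : finrank (ZMod 2) ((Fin (t - (s - t)) → ZMod 2) ×
            ((Fin (s - t) → ZMod 2) × (Fin (s - t) → ZMod 2)))
            = finrank (ZMod 2) (Fin s → ZMod 2) := by
          rw [Module.finrank_prod, Module.finrank_prod]
          simp only [Module.finrank_fin_fun]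
          omega
        obtain ⟨S, h1, h2, h3⟩ := transport (LinearEquiv.ofFinrankEq _ _ hrank) S₀ hc hd hcv
        exact ⟨S, by rw [h1, N_mid ht hlt hcase], h2, h3⟩
      · have h2t : 2 * t ≤ s := by omega
        obtain ⟨Sr, hc, hd, hcv⟩ := IH (s - t) (by omega) (by omega)
        obtain ⟨S₀, hc0, hd0, hcv0⟩ :=
          step_big ht (by omega : t ≤ s - t) Sr hc hd hcv
        have hrank : finrank (ZMod 2) ((Fin t → ZMod 2) × (Fin (s - t) → ZMod 2))
            = finrank (ZMod 2) (Fin s → ZMod 2) := by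
          rw [Module.finrank_prod]
          simp only [Module.finrank_fin_fun]
          omega
        obtain ⟨S, h1, h2, h3⟩ :=
          transport (LinearEquiv.ofFinrankEq _ _ hrank) S₀ hc0 hd0 hcv0
        exact ⟨S, by rw [h1, N_rec ht h2t], h2, h3⟩


end CoveringAux

/-- The covering number `C₂(s,t,1)`: the minimum number of `t`-dimensional subspaces of
`F₂^s` whose union contains every nonzero vector equals `⌈(2^s-1)/(2^t-1)⌉`. -/
theorem covering_design_number (s t : ℕ) (hs : 1 ≤ s) (ht : 1 ≤ t) (hts : t ≤ s) :
    IsLeast {n : ℕ | ∃ S : Finset (Submodule (ZMod 2) (Fin s → ZMod 2)),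
        S.card = n ∧ (∀ V ∈ S, Module.finrank (ZMod 2) V = t) ∧
        ∀ v : Fin s → ZMod 2, v ≠ 0 → ∃ V ∈ S, v ∈ V}
      ((2 ^ s - 1 + (2 ^ t - 1) - 1) / (2 ^ t - 1)) := by
  constructor
  · obtain ⟨S, h1, h2, h3⟩ := CoveringAux.exists_cover t ht s hts
    exact ⟨S, h1, h2, h3⟩
  · rintro n ⟨S, h1, h2, h3⟩
    exact CoveringAux.N_le_of_cover ht (CoveringAux.lower_bound S h1 h2 h3)
end

section
/- Let s be a positive integer and m a positive integer such that 7^m < 2^(s-1) · (2^s - 1). Then Σ_{i=2}^{m} C(m,i) · (2^(i-1) - 1) · 3^i < C(2^s, 2), i.e., the counting condition Σ_{i=2}^{m} C(m,i)·S(i,2)·3^i ≥ C(2^s + 2 - 2, 2) fails. Consequently any m satisfying the counting condition obeys m ≥ log₇(2^(s-1)·(2^s-1)). -/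
lemma sum_le_seven_pow (m : ℕ) :
    ∑ i ∈ Finset.Icc 2 m, m.choose i * (2 ^ (i - 1) - 1) * 3 ^ i ≤ 7 ^ m := by
  have hsub : Finset.Icc 2 m ⊆ Finset.range (m + 1) := by
    intro i hi
    simp only [Finset.mem_Icc, Finset.mem_range] at *
    omega
  have h1 : ∑ i ∈ Finset.Icc 2 m, m.choose i * (2 ^ (i - 1) - 1) * 3 ^ i
      ≤ ∑ i ∈ Finset.range (m + 1), m.choose i * (2 ^ (i - 1) - 1) * 3 ^ i :=
    Finset.sum_le_sum_of_subset_of_nonneg hsub (fun _ _ _ => Nat.zero_le _)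
  have h1' : ∑ i ∈ Finset.range (m + 1), m.choose i * (2 ^ (i - 1) - 1) * 3 ^ i
      ≤ ∑ i ∈ Finset.range (m + 1), m.choose i * 6 ^ i := by
    refine Finset.sum_le_sum fun i _ => ?_
    have hle : (2 ^ (i - 1) - 1) * 3 ^ i ≤ 6 ^ i := by
      calc (2 ^ (i - 1) - 1) * 3 ^ i ≤ 2 ^ i * 3 ^ i := by
            refine Nat.mul_le_mul_right _ ?_
            exact le_trans (Nat.sub_le _ _) (Nat.pow_le_pow_right (by norm_num) (Nat.sub_le _ _))
        _ = 6 ^ i := by rw [← Nat.mul_pow]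
    calc m.choose i * (2 ^ (i - 1) - 1) * 3 ^ i
        = m.choose i * ((2 ^ (i - 1) - 1) * 3 ^ i) := by ring
      _ ≤ m.choose i * 6 ^ i := Nat.mul_le_mul_left _ hle
  have h2 : (7:ℕ) ^ m = ∑ i ∈ Finset.range (m + 1), m.choose i * 6 ^ i := by
    have := add_pow 6 1 m
    simp at this
    rw [show (7:ℕ) = 6 + 1 by norm_num, this]
    refine Finset.sum_congr rfl fun i _ => by ring
  omega

lemma choose_eq (s : ℕ) (hs : 1 ≤ s) :
    (2 ^ s).choose 2 = 2 ^ (s - 1) * (2 ^ s - 1) := by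
  rw [Nat.choose_two_right]
  have h2s : (2:ℕ) ^ s = 2 * 2 ^ (s - 1) := by
    rw [← pow_succ']
    congr 1
    omega
  conv_lhs => rw [h2s, mul_assoc, Nat.mul_div_cancel_left _ (by norm_num)]
  rw [h2s]

/-- If `7^m < 2^(s-1)·(2^s-1)` then the counting condition
`∑_{i=2}^m C(m,i)·S(i,2)·3^i ≥ C(2^s+2-2, 2)` fails; consequently any `m` satisfying
the counting condition obeys `m ≥ log₇(2^(s-1)·(2^s-1))`. -/
theorem fb_counting_lower_bound (s m : ℕ) (hs : 1 ≤ s) (hm : 1 ≤ m)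
    (h : 7 ^ m < 2 ^ (s - 1) * (2 ^ s - 1)) :
    (∑ i ∈ Finset.Icc 2 m, m.choose i * (2 ^ (i - 1) - 1) * 3 ^ i < (2 ^ s).choose 2) ∧
    ∀ m' : ℕ, 1 ≤ m' →
      (2 ^ s + 2 - 2).choose 2 ≤
        ∑ i ∈ Finset.Icc 2 m', m'.choose i * (2 ^ (i - 1) - 1) * 3 ^ i →
      (m' : ℝ) ≥ Real.logb 7 ((2 : ℝ) ^ (s - 1) * (2 ^ s - 1)) := by
  have hc := choose_eq s hs
  constructor
  · rw [hc]
    exact lt_of_le_of_lt (sum_le_seven_pow m) h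
  · intro m' hm' hcond
    simp only [Nat.add_sub_cancel] at hcond
    have key : 2 ^ (s - 1) * (2 ^ s - 1) ≤ 7 ^ m' :=
      hc ▸ hcond.trans (sum_le_seven_pow m')
    have h1n : (1:ℕ) ≤ 2 ^ s := Nat.one_le_two_pow
    have hx : ((2:ℝ) ^ (s - 1) * ((2:ℝ) ^ s - 1)) ≤ (7:ℝ) ^ m' := by
      have := (Nat.cast_le (α := ℝ)).mpr key
      rw [Nat.cast_mul, Nat.cast_sub h1n] at this
      push_cast at this
      exact this
    have h1r : (1:ℝ) < 2 ^ s := by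
      have : (2:ℝ) ^ 1 ≤ 2 ^ s := pow_le_pow_right₀ (by norm_num) hs
      linarith
    have hpos : (0:ℝ) < (2:ℝ) ^ (s - 1) * (2 ^ s - 1) := by
      have := pow_pos (show (0:ℝ) < 2 by norm_num) (s - 1)
      nlinarith
    rw [ge_iff_le, Real.logb_le_iff_le_rpow (by norm_num) hpos, Real.rpow_natCast]
    exact hx
end

section
/- Let s, t, m, r be positive integers and suppose there is a function E : F₂^s → (F₂^t)^m (an encoding into m buckets of t bits) such that for every nonzero u ∈ F₂^s there exists a set S ⊆ {1,...,m} with |S| ≤ r and a choice, for each bucket j ∈ S, of a nonzero F₂-linear functional of that bucket's contents, whose sum equals the linear functional x ↦ ⟨u,x⟩, where E is F₂-linear. Then there exists an s × (m·(2^t - 1)) matrix H over F₂ such that every vector of F₂^s is a sum of at most r columns of H. In particular h[s,r] ≤ m·(2^t - 1), where h[s,r] is the smallest length of a binary linear code with covering radius r and redundancy s. -/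
/-- `binaryCoveringLength s r` is `h[s,r]`: the smallest length `n` of a binary linear
code with redundancy `s` and covering radius `r`, i.e. the smallest `n` for which there
is an `s × n` parity check matrix over `F₂` every syndrome of which is a sum of at most
`r` columns. -/
noncomputable def binaryCoveringLength (s r : ℕ) : ℕ :=
  sInf {n : ℕ | ∃ H : Matrix (Fin s) (Fin n) (ZMod 2),
    ∀ v : Fin s → ZMod 2, ∃ T : Finset (Fin n), T.card ≤ r ∧ v = ∑ j ∈ T, fun i => H i j}

/-- A linear `(s,1,m,t,r)` locality functional array code yields a parity check matrix of
a binary covering code of length `m·(2^t-1)` and covering radius `r`; in particular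
`h[s,r] ≤ m·(2^t-1)`. -/
theorem locality_code_to_covering_code (s t m r : ℕ)
    (hs : 1 ≤ s) (ht : 1 ≤ t) (hm : 1 ≤ m) (hr : 1 ≤ r)
    (E : (Fin s → ZMod 2) → Fin m → Fin t → ZMod 2)
    (hlin : IsLinearMap (ZMod 2) E)
    (hrec : ∀ u : Fin s → ZMod 2, u ≠ 0 →
      ∃ (S : Finset (Fin m)) (f : Fin m → Fin t → ZMod 2),
        S.card ≤ r ∧ (∀ j ∈ S, f j ≠ 0) ∧
        ∀ x : Fin s → ZMod 2,
          ∑ j ∈ S, ∑ i : Fin t, f j i * E x j i = ∑ i : Fin s, u i * x i) :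
    (∃ H : Matrix (Fin s) (Fin (m * (2 ^ t - 1))) (ZMod 2),
      ∀ v : Fin s → ZMod 2, ∃ T : Finset (Fin (m * (2 ^ t - 1))),
        T.card ≤ r ∧ v = ∑ j ∈ T, fun i => H i j) ∧
    binaryCoveringLength s r ≤ m * (2 ^ t - 1) := by
  classical
  have hcard : Fintype.card {f : Fin t → ZMod 2 // f ≠ 0} = 2 ^ t - 1 := by
    have := Fintype.card_subtype_compl (p := fun f : Fin t → ZMod 2 => f = 0)
    simpa using this
  let e : {f : Fin t → ZMod 2 // f ≠ 0} ≃ Fin (2 ^ t - 1) :=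
    Fintype.equivFinOfCardEq hcard
  let ι : Fin m × {f : Fin t → ZMod 2 // f ≠ 0} ≃ Fin (m * (2 ^ t - 1)) :=
    ((Equiv.refl (Fin m)).prodCongr e).trans finProdFinEquiv
  let H : Matrix (Fin s) (Fin (m * (2 ^ t - 1))) (ZMod 2) :=
    fun i c => ∑ k : Fin t, ((ι.symm c).2 : Fin t → ZMod 2) k *
      E (Pi.single i 1) (ι.symm c).1 k
  have key : ∀ v : Fin s → ZMod 2, ∃ T : Finset (Fin (m * (2 ^ t - 1))),
      T.card ≤ r ∧ v = ∑ j ∈ T, fun i => H i j := by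
    intro v
    by_cases hv : v = 0
    · exact ⟨∅, by simp, by simp [hv]⟩
    · obtain ⟨S, f, hS, hf, heq⟩ := hrec v hv
      set g : {x // x ∈ S} → Fin (m * (2 ^ t - 1)) :=
        fun j => ι (j.1, ⟨f j.1, hf j.1 j.2⟩) with hg
      have hginj : Function.Injective g := by
        intro a b hab
        have := ι.injective hab
        exact Subtype.ext (congrArg Prod.fst this)
      refine ⟨S.attach.image g, ?_, ?_⟩
      · rw [Finset.card_image_of_injective _ hginj, Finset.card_attach]
        exact hS
      · funext i
        have hsum : (∑ j ∈ S.attach.image g, fun i => H i j) i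
            = ∑ j ∈ S.attach, H i (g j) := by
          rw [Finset.sum_apply]
          exact Finset.sum_image (fun a _ b _ h => hginj h)
        rw [hsum]
        have hcol : ∀ j : {x // x ∈ S}, H i (g j)
            = ∑ k : Fin t, f j.1 k * E (Pi.single i 1) j.1 k := by
          intro j
          simp only [H, hg, Equiv.symm_apply_apply]
        rw [Finset.sum_congr rfl (fun j _ => hcol j)]
        have := heq (Pi.single i 1)
        rw [Finset.sum_attach S (fun j => ∑ k : Fin t, f j k * E (Pi.single i 1) j k)]
        rw [this]
        rw [Fintype.sum_eq_single i (fun b hb => by simp [Pi.single_apply, hb])]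
        simp
  refine ⟨⟨H, key⟩, Nat.sInf_le ⟨H, key⟩⟩
end
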